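/- Let f : ℝⁿ → ℝ be a continuous function with f^lc > -∞ everywhere and lim_{|ξ|→+∞} f(ξ) = +∞. Then for every c ∈ ℝ, the convex hull of the sublevel set of f at level c equals the sublevel set of f^lc at level c: co{ξ ∈ ℝⁿ : f(ξ) ≤ c} = {ξ ∈ ℝⁿ : f^lc(ξ) ≤ c}. -/

import Mathlib

open Set

/-- A function on `ℝⁿ` with values in a linear order is *level convex* if
`f (t ξ + (1-t) η) ≤ max (f ξ) (f η)` for all `ξ, η` and `t ∈ [0,1]`. -/
def LevelConvex {n : ℕ} {β : Type*} [LinearOrder β]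
    (f : EuclideanSpace ℝ (Fin n) → β) : Prop :=
  ∀ ξ η : EuclideanSpace ℝ (Fin n), ∀ t ∈ Set.Icc (0 : ℝ) 1,
    f (t • ξ + (1 - t) • η) ≤ max (f ξ) (f η)

/-- The level convex envelope of `f : ℝⁿ → [-∞,+∞]`. -/
noncomputable def lcEnv {n : ℕ} (f : EuclideanSpace ℝ (Fin n) → EReal) :
    EuclideanSpace ℝ (Fin n) → EReal :=
  fun ξ => ⨆ (g : EuclideanSpace ℝ (Fin n) → EReal)
    (_ : LevelConvex g ∧ g ≤ f), g ξ

lemma lcEnv_le {n : ℕ} (f : EuclideanSpace ℝ (Fin n) → EReal) : lcEnv f ≤ f :=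
  fun ξ => iSup₂_le fun _ hg => hg.2 ξ

lemma le_lcEnv {n : ℕ} {f g : EuclideanSpace ℝ (Fin n) → EReal}
    (h1 : LevelConvex g) (h2 : g ≤ f) : g ≤ lcEnv f :=
  fun ξ => le_iSup₂ (f := fun g (_ : LevelConvex g ∧ g ≤ f) => g ξ) g ⟨h1, h2⟩

lemma levelConvex_lcEnv {n : ℕ} (f : EuclideanSpace ℝ (Fin n) → EReal) :
    LevelConvex (lcEnv f) := by
  intro ξ η t ht
  refine iSup₂_le fun g hg => ?_
  exact le_trans (hg.1 ξ η t ht)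
    (max_le_max (le_iSup₂ (f := fun g (_ : LevelConvex g ∧ g ≤ f) => g ξ) g hg)
      (le_iSup₂ (f := fun g (_ : LevelConvex g ∧ g ≤ f) => g η) g hg))

/-- In a finite-dimensional Euclidean space, the convex hull of a compact set
is compact. -/
lemma isCompact_convexHull_of_isCompact {n : ℕ} {s : Set (EuclideanSpace ℝ (Fin n))}
    (hs : IsCompact s) : IsCompact (convexHull ℝ s) := by
  rcases s.eq_empty_or_nonempty with rfl | ⟨s₀, hs₀⟩
  · simp
  set m := n + 1 with hm
  set Φ : (Fin m → ℝ) × (Fin m → EuclideanSpace ℝ (Fin n)) → EuclideanSpace ℝ (Fin n) :=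
    fun p => ∑ i, p.1 i • p.2 i with hΦdef
  have hΦ : Continuous Φ := by
    apply continuous_finset_sum
    intro i _
    exact ((continuous_apply i).comp continuous_fst).smul
      ((continuous_apply i).comp continuous_snd)
  have hD : IsCompact ((stdSimplex ℝ (Fin m)) ×ˢ (Set.pi Set.univ
      fun _ : Fin m => s)) :=
    (isCompact_stdSimplex (𝕜 := ℝ) (ι := Fin m)).prod (isCompact_univ_pi fun _ => hs)
  have him : convexHull ℝ s =
      Φ '' ((stdSimplex ℝ (Fin m)) ×ˢ (Set.pi Set.univ fun _ : Fin m => s)) := by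
    apply Set.Subset.antisymm
    · intro x hx
      obtain ⟨ι, hfin, z, w, hrange, hindep, hpos, hsum, hcomb⟩ :=
        eq_pos_convex_span_of_mem_convexHull hx
      have hcard : Fintype.card ι ≤ m := by
        have h1 := hindep.card_le_finrank_succ
        have h2 : Module.finrank ℝ (vectorSpan ℝ (Set.range z)) ≤ n := by
          have := Submodule.finrank_le (vectorSpan ℝ (Set.range z))
          rwa [finrank_euclideanSpace_fin] at this
        omega
      obtain ⟨e⟩ : Nonempty (ι ↪ Fin m) := Function.Embedding.nonempty_of_card_le (by simpa using hcard)
      set w' : Fin m → ℝ := Function.extend e w 0 with hw'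
      set z' : Fin m → EuclideanSpace ℝ (Fin n) :=
        Function.extend e z (fun _ => s₀) with hz'
      have hsum_eq : ∀ {M : Type} [AddCommMonoid M] (F : Fin m → M),
          (∀ j, (¬ ∃ i, e i = j) → F j = 0) → ∑ j, F j = ∑ i, F (e i) := by
        intro M _ F hF
        rw [show (∑ i, F (e i)) = ∑ j ∈ Finset.univ.image e, F j from
          (Finset.sum_image (fun i _ j _ h => e.injective h)).symm]
        refine (Finset.sum_subset (Finset.subset_univ _) ?_).symm
        intro j _ hj
        refine hF j fun ⟨i, hi⟩ => hj ?_
        exact Finset.mem_image.mpr ⟨i, Finset.mem_univ i, hi⟩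
      have hwz : ∀ i, w' (e i) = w i ∧ z' (e i) = z i := fun i =>
        ⟨e.injective.extend_apply w 0 i, e.injective.extend_apply z _ i⟩
      refine ⟨⟨w', z'⟩, Set.mem_prod.2 ⟨?_, ?_⟩, ?_⟩
      · show w' ∈ stdSimplex ℝ (Fin m)
        constructor
        · intro j
          by_cases h : ∃ i, e i = j
          · obtain ⟨i, rfl⟩ := h
            rw [(hwz i).1]; exact (hpos i).le
          · rw [hw', Function.extend_apply' _ _ _ h]; rfl
        · rw [hsum_eq w' (fun j hj => by rw [hw', Function.extend_apply' _ _ _ hj]; rfl)]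
          calc ∑ i, w' (e i) = ∑ i, w i := by
                refine Finset.sum_congr rfl fun i _ => (hwz i).1
            _ = 1 := hsum
      · refine Set.mem_univ_pi.2 fun j => ?_
        show z' j ∈ s
        by_cases h : ∃ i, e i = j
        · obtain ⟨i, rfl⟩ := h
          rw [(hwz i).2]; exact hrange ⟨i, rfl⟩
        · rw [hz', Function.extend_apply' _ _ _ h]; exact hs₀
      · have : Φ ⟨w', z'⟩ = ∑ i, w' (e i) • z' (e i) := by
          rw [hΦdef]
          refine hsum_eq (fun j => w' j • z' j) (fun j hj => ?_)
          show w' j • z' j = 0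
          have h0 : w' j = 0 := Function.extend_apply' _ _ _ hj
          rw [h0, zero_smul]
        rw [this, ← hcomb]
        refine Finset.sum_congr rfl fun i _ => ?_
        rw [(hwz i).1, (hwz i).2]
    · rintro x ⟨⟨w, z⟩, ⟨hw, hz⟩, rfl⟩
      exact Convex.sum_mem (convex_convexHull ℝ s) (fun i _ => hw.1 i)
        hw.2 (fun i _ => subset_convexHull ℝ s (hz i (Set.mem_univ i)))
  rw [him]
  exact hD.image hΦ

/-- If `f : ℝⁿ → ℝ` is continuous, `f^lc > -∞` everywhere, and `f ξ → +∞` as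
`|ξ| → +∞`, then for every `c ∈ ℝ`,
`co {ξ : f ξ ≤ c} = {ξ : f^lc ξ ≤ c}`. -/
theorem convexHull_sublevel_eq_sublevel_lcEnv {n : ℕ}
    (f : EuclideanSpace ℝ (Fin n) → ℝ) (hf : Continuous f)
    (hlcbot : ∀ ξ, lcEnv (fun η => (f η : EReal)) ξ ≠ ⊥)
    (hcoer : ∀ M : ℝ, ∃ R : ℝ, ∀ ξ : EuclideanSpace ℝ (Fin n), R ≤ ‖ξ‖ → M ≤ f ξ) :
    ∀ c : ℝ,
      convexHull ℝ {ξ : EuclideanSpace ℝ (Fin n) | f ξ ≤ c} =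
        {ξ : EuclideanSpace ℝ (Fin n) | lcEnv (fun η => (f η : EReal)) ξ ≤ (c : EReal)} := by
  set F : EuclideanSpace ℝ (Fin n) → EReal := fun η => (f η : EReal) with hF
  -- sublevel sets are compact
  have hScompact : ∀ d : ℝ, IsCompact {η : EuclideanSpace ℝ (Fin n) | f η ≤ d} := by
    intro d
    obtain ⟨R, hR⟩ := hcoer (d + 1)
    have hclosed : IsClosed {η : EuclideanSpace ℝ (Fin n) | f η ≤ d} :=
      isClosed_le hf continuous_const
    refine Metric.isCompact_of_isClosed_isBounded hclosed
      (Metric.isBounded_closedBall (x := 0) (r := R) |>.subset ?_)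
    intro η hη
    rw [Metric.mem_closedBall, dist_zero_right]
    by_contra h
    push_neg at h
    have := hR η h.le
    have : f η ≤ d := hη
    linarith [hR η h.le]
  have hmemmono : ∀ d₁ d₂ : ℝ, d₁ ≤ d₂ →
      convexHull ℝ {η : EuclideanSpace ℝ (Fin n) | f η ≤ d₁} ⊆
      convexHull ℝ {η : EuclideanSpace ℝ (Fin n) | f η ≤ d₂} := fun _ _ h =>
    convexHull_mono fun η hη => le_trans hη h
  intro c
  apply Set.Subset.antisymm
  · -- easy direction
    apply convexHull_min
    · intro x hx
      calc lcEnv F x ≤ F x := lcEnv_le F x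
        _ ≤ (c : EReal) := EReal.coe_le_coe_iff.2 hx
    · intro x hx y hy a b ha hb hab
      have hb' : b = 1 - a := by linarith
      have := levelConvex_lcEnv F x y a ⟨ha, by linarith⟩
      rw [hb']
      exact le_trans this (max_le hx hy)
  · -- hard direction
    intro ξ hξ
    simp only [Set.mem_setOf_eq] at hξ
    set g : EuclideanSpace ℝ (Fin n) → EReal := fun x =>
      ⨅ (d : ℝ) (_ : x ∈ convexHull ℝ {η : EuclideanSpace ℝ (Fin n) | f η ≤ d}),
        (d : EReal) with hg
    have hgle : g ≤ F := by
      intro x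
      have hx0 : x ∈ {η : EuclideanSpace ℝ (Fin n) | f η ≤ f x} := by
        simp only [Set.mem_setOf_eq, le_refl]
      have hx : x ∈ convexHull ℝ {η : EuclideanSpace ℝ (Fin n) | f η ≤ f x} :=
        subset_convexHull ℝ {η : EuclideanSpace ℝ (Fin n) | f η ≤ f x} hx0
      exact iInf₂_le (f x) hx
    have hglc : LevelConvex g := by
      intro x y t ht
      by_contra hcon
      push_neg at hcon
      obtain ⟨d, hd1, hd2⟩ := EReal.exists_between_coe_real hcon
      have hx : g x < (d : EReal) := (le_max_left _ _).trans_lt hd1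
      have hy : g y < (d : EReal) := (le_max_right _ _).trans_lt hd1
      rw [hg, iInf_lt_iff] at hx hy
      obtain ⟨d₁, hx⟩ := hx
      obtain ⟨d₂, hy⟩ := hy
      rw [iInf_lt_iff] at hx hy
      obtain ⟨hmx, hd₁⟩ := hx
      obtain ⟨hmy, hd₂⟩ := hy
      have hd₁' : d₁ ≤ d := by exact_mod_cast hd₁.le
      have hd₂' : d₂ ≤ d := by exact_mod_cast hd₂.le
      have hmx' := hmemmono d₁ d hd₁' hmx
      have hmy' := hmemmono d₂ d hd₂' hmy
      have hcomb : t • x + (1 - t) • y ∈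
          convexHull ℝ {η : EuclideanSpace ℝ (Fin n) | f η ≤ d} :=
        (convex_convexHull ℝ _) hmx' hmy' ht.1 (by linarith [ht.2]) (by ring)
      have : g (t • x + (1 - t) • y) ≤ (d : EReal) := iInf₂_le d hcomb
      exact absurd (this.trans_lt hd2) (lt_irrefl _)
    have hgξ : g ξ ≤ (c : EReal) := le_trans (le_lcEnv hglc hgle ξ) hξ
    have hmem : ∀ d : ℝ, c < d →
        ξ ∈ convexHull ℝ {η : EuclideanSpace ℝ (Fin n) | f η ≤ d} := by
      intro d hd
      have hlt : g ξ < (d : EReal) := lt_of_le_of_lt hgξ (by exact_mod_cast hd)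
      rw [hg, iInf_lt_iff] at hlt
      obtain ⟨d₁, hlt⟩ := hlt
      rw [iInf_lt_iff] at hlt
      obtain ⟨hm, hlt⟩ := hlt
      exact hmemmono d₁ d (by exact_mod_cast hlt.le) hm
    by_contra hK
    have hKcompact : IsCompact (convexHull ℝ {η : EuclideanSpace ℝ (Fin n) | f η ≤ c}) :=
      isCompact_convexHull_of_isCompact (hScompact c)
    obtain ⟨φ, u, hφK, hφξ⟩ := geometric_hahn_banach_closed_point
      (convex_convexHull ℝ _) hKcompact.isClosed hK
    set A : ℕ → Set (EuclideanSpace ℝ (Fin n)) := fun k =>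
      {η | f η ≤ c + 1 / (k + 1)} ∩ {η | u ≤ φ η} with hA
    have hAclosed : ∀ k, IsClosed (A k) := fun k =>
      (isClosed_le hf continuous_const).inter (isClosed_le continuous_const φ.continuous)
    have hAsub : ∀ k, A k ⊆ {η | f η ≤ c + 1} := by
      intro k η hη
      have h1 : (1 : ℝ) / (k + 1) ≤ 1 := by
        rw [div_le_one (by positivity)]
        simp
      have := hη.1
      simp only [Set.mem_setOf_eq] at this ⊢
      linarith
    have hAcompact : ∀ k, IsCompact (A k) := fun k =>
      (hScompact (c + 1)).of_isClosed_subset (hAclosed k) (hAsub k)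
    have hAne : ∀ k, (A k).Nonempty := by
      intro k
      by_contra hemp
      rw [Set.not_nonempty_iff_eq_empty] at hemp
      have hsub : {η : EuclideanSpace ℝ (Fin n) | f η ≤ c + 1 / (k + 1)} ⊆
          {η | φ η < u} := by
        intro η hη
        by_contra h
        have h2 : η ∈ {η : EuclideanSpace ℝ (Fin n) | u ≤ φ η} := by
          simp only [Set.mem_setOf_eq]
          exact le_of_not_gt fun hc => h hc
        have : η ∈ A k := ⟨hη, h2⟩
        rw [hemp] at this
        exact this
      have hconv : Convex ℝ {η : EuclideanSpace ℝ (Fin n) | φ η < u} :=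
        convex_halfSpace_lt ⟨φ.map_add, φ.map_smul⟩ u
      have hcd : c < c + 1 / (k + 1) := by
        have : (0 : ℝ) < 1 / (k + 1) := by positivity
        linarith
      have := convexHull_min hsub hconv (hmem _ hcd)
      simp only [Set.mem_setOf_eq] at this
      linarith
    have hAmono : ∀ i k : ℕ, i ≤ k → A k ⊆ A i := by
      intro i k hik η hη
      refine ⟨?_, hη.2⟩
      have h1 : (1 : ℝ) / (k + 1) ≤ 1 / (i + 1) := by
        apply one_div_le_one_div_of_le (by positivity)
        exact_mod_cast by omega
      have := hη.1
      simp only [Set.mem_setOf_eq] at this ⊢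
      linarith
    have hdir : Directed (· ⊇ ·) A := fun i j =>
      ⟨max i j, hAmono i _ (le_max_left i j), hAmono j _ (le_max_right i j)⟩
    obtain ⟨x, hx⟩ := IsCompact.nonempty_iInter_of_directed_nonempty_isCompact_isClosed
      A hdir hAne hAcompact hAclosed
    have hfx : f x ≤ c := by
      by_contra h
      push_neg at h
      obtain ⟨k, hk⟩ := exists_nat_one_div_lt (sub_pos.2 h)
      have := (Set.mem_iInter.1 hx k).1
      simp only [Set.mem_setOf_eq] at this
      linarith
    have hux : u ≤ φ x := (Set.mem_iInter.1 hx 0).2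
    have hlt : φ x < u := hφK x (subset_convexHull ℝ _ hfx)
    linarith
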